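/- Let b₀ ∈ ℝ², let e, e' ∈ S¹ be two directions in the open northeast quadrant with angular separation at least δ^s, and let T, T' be tubes of width 2δ containing b₀ with directions e, e' respectively. If x ∈ T and y ∈ T' with |x − b₀| ≥ Cδ^{1−s} and |y − b₀| ≥ Cδ^{1−s} for a sufficiently large absolute constant C, and both x − b₀, y − b₀ lie in the closed cone spanned by e and e', then the point (x + y) − b₀ lies in the open conical region with apex b₀ between the two tubes T and T', at distance greater than δ from both T and T' (outside both tubes). -/

import Mathlib

noncomputable section

/-- Euclidean distance in the plane (modeled as `ℝ × ℝ`). -/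
def ed (p q : ℝ × ℝ) : ℝ := Real.sqrt ((p.1 - q.1)^2 + (p.2 - q.2)^2)

/-- Standard inner product on `ℝ × ℝ`. -/
def dot (p q : ℝ × ℝ) : ℝ := p.1 * q.1 + p.2 * q.2

/-- Rotation by `π/2`: a unit normal to `e`. -/
def perp (e : ℝ × ℝ) : ℝ × ℝ := (-e.2, e.1)

lemma unit_of_ed {e : ℝ × ℝ} (h : ed e 0 = 1) : e.1^2 + e.2^2 = 1 := by
  have h2 : Real.sqrt ((e.1-0)^2+(e.2-0)^2) = 1 := h
  have h3 := Real.sq_sqrt (by positivity : (0:ℝ) ≤ (e.1-0)^2+(e.2-0)^2)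
  rw [h2] at h3
  nlinarith

lemma abs_dot_le {n : ℝ × ℝ} (hn : n.1^2 + n.2^2 = 1) (p w : ℝ × ℝ) :
    |n.1 * (p.1 - w.1) + n.2 * (p.2 - w.2)| ≤ ed p w := by
  have h1 : (n.1 * (p.1 - w.1) + n.2 * (p.2 - w.2))^2 ≤ (p.1-w.1)^2 + (p.2-w.2)^2 := by
    nlinarith [sq_nonneg (n.1*(p.2-w.2) - n.2*(p.1-w.1)), sq_nonneg (p.1-w.1), sq_nonneg (p.2-w.2)]
  calc |n.1 * (p.1 - w.1) + n.2 * (p.2 - w.2)|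
      = Real.sqrt ((n.1 * (p.1 - w.1) + n.2 * (p.2 - w.2))^2) := (Real.sqrt_sq_eq_abs _).symm
    _ ≤ ed p w := Real.sqrt_le_sqrt h1

lemma aux_le_one {σ c : ℝ} (h : σ^2 + c^2 = 1) : c ≤ 1 := by
  nlinarith [sq_nonneg σ, sq_nonneg (c - 1)]

lemma aux_dot_le_one {e1 e2 f1 f2 : ℝ} (h : e1^2 + e2^2 = 1) (h' : f1^2 + f2^2 = 1) :
    e1 * f1 + e2 * f2 ≤ 1 := by
  nlinarith [sq_nonneg (e1 - f1), sq_nonneg (e2 - f2)]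

lemma aux_norm_le {e1 e2 f1 f2 a b : ℝ} (h : e1^2 + e2^2 = 1) (h' : f1^2 + f2^2 = 1)
    (ha : 0 ≤ a) (hb : 0 ≤ b) :
    (a*e1 + b*f1)^2 + (a*e2 + b*f2)^2 ≤ (a + b)^2 := by
  have ha2 : a^2*e1^2 + a^2*e2^2 = a^2 := by linear_combination a^2 * h
  have hb2 : b^2*f1^2 + b^2*f2^2 = b^2 := by linear_combination b^2 * h'
  have hab : a*b*e1^2 + a*b*e2^2 = a*b := by linear_combination (a*b) * h
  have hab' : a*b*f1^2 + a*b*f2^2 = a*b := by linear_combination (a*b) * h'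
  nlinarith [mul_nonneg (mul_nonneg ha hb) (sq_nonneg (e1 - f1)),
    mul_nonneg (mul_nonneg ha hb) (sq_nonneg (e2 - f2)), ha2, hb2, hab, hab']

lemma aux_ub {δ es e1s b σa : ℝ} (hδ : 0 < δ) (hes : 0 < es) (hprod : e1s * es = δ)
    (hb : 0 ≤ b) (hσlb : 2 / Real.pi * es ≤ σa) (hbσ : b * σa ≤ 2 * δ) :
    b ≤ Real.pi * e1s := by
  have hπ := Real.pi_pos
  have h1 : b * (2 / Real.pi * es) ≤ 2 * δ :=
    le_trans (mul_le_mul_of_nonneg_left hσlb hb) hbσ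
  have h2 : b * es ≤ Real.pi * δ := by
    have h4 := mul_le_mul_of_nonneg_left h1 (by positivity : (0:ℝ) ≤ Real.pi / 2)
    have h5 : Real.pi / 2 * (b * (2 / Real.pi * es)) = b * es := by
      field_simp
    nlinarith [h4, h5]
  have h6 : b * es ≤ (Real.pi * e1s) * es := by rw [mul_assoc, hprod]; exact h2
  exact le_of_mul_le_mul_right h6 hes

lemma aux_key {δ es e1s u σa : ℝ} (hδ : 0 < δ) (hes : 0 < es) (he1s : 0 < e1s)
    (hprod : e1s * es = δ) (hσlb : 2 / Real.pi * es ≤ σa)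
    (hu : (10 - Real.pi) * e1s ≤ u) : 3 * δ < u * σa := by
  have hπ := Real.pi_pos
  have hπlt : Real.pi < 4 := Real.pi_lt_d2.trans (by norm_num)
  have hu0 : 0 ≤ u := le_trans (by nlinarith) hu
  have h1 : (10 - Real.pi) * e1s * (2 / Real.pi * es) ≤ u * σa :=
    mul_le_mul hu hσlb (by positivity) hu0
  have h2 : (10 - Real.pi) * e1s * (2 / Real.pi * es) = 2 * (10 - Real.pi) / Real.pi * δ := by
    field_simp
    linear_combination (10 - Real.pi) * hprod
  have h3 : 3 * δ < 2 * (10 - Real.pi) / Real.pi * δ := by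
    rw [div_mul_eq_mul_div, lt_div_iff₀ hπ]
    nlinarith
  linarith

set_option maxHeartbeats 1000000 in
/-- Solymosi-type geometry: if `e, e'` are unit directions in the open northeast
quadrant with angle `≥ δ^s`, `T, T'` are `2δ`-wide tubes with directions `e, e'`
containing `b₀`, and `x ∈ T`, `y ∈ T'` lie in the closed cone spanned by `e, e'`
(based at `b₀`) with `|x - b₀|, |y - b₀| ≥ C·δ^{1-s}` for a large absolute `C`,
then `(x + y) - b₀` lies in the open cone with apex `b₀` between the tubes, at
distance greater than `δ` from both tubes. -/
theorem stmt13 :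
    ∃ C : ℝ, 0 < C ∧
      ∀ (δ s : ℝ) (b₀ e e' : ℝ × ℝ) (t t' : ℝ) (x y : ℝ × ℝ),
        0 < δ → 0 < s → s < 1 →
        ed e 0 = 1 → ed e' 0 = 1 →
        0 < e.1 → 0 < e.2 → 0 < e'.1 → 0 < e'.2 →
        δ ^ s ≤ Real.arccos (dot e e') →
        |dot (perp e) b₀ - t| ≤ δ → |dot (perp e') b₀ - t'| ≤ δ →
        |dot (perp e) x - t| ≤ δ → |dot (perp e') y - t'| ≤ δ →
        C * δ ^ (1 - s) ≤ ed x b₀ → C * δ ^ (1 - s) ≤ ed y b₀ →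
        (∃ a b : ℝ, 0 ≤ a ∧ 0 ≤ b ∧ x - b₀ = a • e + b • e') →
        (∃ a b : ℝ, 0 ≤ a ∧ 0 ≤ b ∧ y - b₀ = a • e + b • e') →
        (∃ a b : ℝ, 0 < a ∧ 0 < b ∧ (x + y - b₀) - b₀ = a • e + b • e') ∧
        (∀ w : ℝ × ℝ, |dot (perp e) w - t| ≤ δ → δ < ed (x + y - b₀) w) ∧
        (∀ w : ℝ × ℝ, |dot (perp e') w - t'| ≤ δ → δ < ed (x + y - b₀) w) := by
  refine ⟨10, by norm_num, ?_⟩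
  intro δ s b₀ e e' t t' x y hδ hs hs1 he he' he1 he2 he1' he2' hang hb hb' hxT hyT hxfar hyfar hxc hyc
  obtain ⟨a, b, ha, hbnn, hxab⟩ := hxc
  obtain ⟨a', b', ha', hbnn', hyab⟩ := hyc
  have hue := unit_of_ed he
  have hue' := unit_of_ed he'
  -- coordinates
  have hx1 : x.1 - b₀.1 = a * e.1 + b * e'.1 := by
    have := congrArg Prod.fst hxab; simpa using this
  have hx2 : x.2 - b₀.2 = a * e.2 + b * e'.2 := by
    have := congrArg Prod.snd hxab; simpa using this
  have hy1 : y.1 - b₀.1 = a' * e.1 + b' * e'.1 := by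
    have := congrArg Prod.fst hyab; simpa using this
  have hy2 : y.2 - b₀.2 = a' * e.2 + b' * e'.2 := by
    have := congrArg Prod.snd hyab; simpa using this
  set σ : ℝ := e.1 * e'.2 - e.2 * e'.1 with hσ
  set c : ℝ := dot e e' with hc
  have hlag : σ^2 + c^2 = 1 := by
    simp only [hσ, hc, dot]; linear_combination (e'.1^2 + e'.2^2) * hue + hue'
  have hcpos : 0 < c := by simp only [hc, dot]; positivity
  -- angle bound
  have hθ2 : Real.arccos c ≤ Real.pi / 2 := Real.arccos_le_pi_div_two.2 hcpos.le
  have hθ0 : 0 ≤ Real.arccos c := Real.arccos_nonneg _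
  have hsin := Real.mul_le_sin hθ0 hθ2
  have hc1 : c ≤ 1 := aux_le_one hlag
  have hsineq : Real.sin (Real.arccos c) = Real.sqrt (1 - c^2) := by
    rw [Real.sin_arccos]
  have habs : |σ| = Real.sqrt (1 - c^2) := by
    rw [show (1:ℝ) - c^2 = σ^2 by linarith, Real.sqrt_sq_eq_abs]
  have hδs : 0 < δ ^ s := Real.rpow_pos_of_pos hδ s
  have hδ1s : 0 < δ ^ (1-s) := Real.rpow_pos_of_pos hδ (1-s)
  have hprod : δ ^ (1-s) * δ ^ s = δ := by
    rw [← Real.rpow_add hδ]; norm_num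
  have hπ : 0 < Real.pi := Real.pi_pos
  have hπlt : Real.pi < 4 := Real.pi_lt_d2.trans (by norm_num)
  -- |σ| ≥ (2/π) δ^s
  have hσlb : 2 / Real.pi * δ ^ s ≤ |σ| := by
    rw [habs, ← hsineq]
    calc 2 / Real.pi * δ ^ s ≤ 2 / Real.pi * Real.arccos c := by
          apply mul_le_mul_of_nonneg_left hang (by positivity)
      _ ≤ _ := hsin
  -- tube conditions give b|σ| ≤ 2δ and a'|σ| ≤ 2δ
  have hbσ : b * |σ| ≤ 2 * δ := by
    have h1 : dot (perp e) x - dot (perp e) b₀ = b * σ := by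
      simp only [dot, perp, hσ]; linear_combination (-e.2) * hx1 + e.1 * hx2
    have h2 : |b * σ| ≤ 2 * δ := by
      calc |b * σ| = |(dot (perp e) x - t) - (dot (perp e) b₀ - t)| := by rw [← h1]; ring_nf
        _ ≤ |dot (perp e) x - t| + |dot (perp e) b₀ - t| := abs_sub _ _
        _ ≤ 2 * δ := by linarith
    rw [abs_mul, abs_of_nonneg hbnn] at h2
    exact h2
  have haσ : a' * |σ| ≤ 2 * δ := by
    have h1 : dot (perp e') y - dot (perp e') b₀ = a' * (-σ) := by
      simp only [dot, perp, hσ]; linear_combination (-e'.2) * hy1 + e'.1 * hy2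
    have h2 : |a' * σ| ≤ 2 * δ := by
      calc |a' * σ| = |(dot (perp e') y - t') - (dot (perp e') b₀ - t')| := by
            rw [show (dot (perp e') y - t') - (dot (perp e') b₀ - t') = a' * (-σ) by
              linarith [h1], abs_mul, abs_mul, abs_neg]
        _ ≤ |dot (perp e') y - t'| + |dot (perp e') b₀ - t'| := abs_sub _ _
        _ ≤ 2 * δ := by linarith
    rw [abs_mul, abs_of_nonneg ha'] at h2
    exact h2
  -- b ≤ π δ^{1-s}, a' ≤ π δ^{1-s}
  have hbub : b ≤ Real.pi * δ ^ (1-s) := aux_ub hδ hδs hprod hbnn hσlb hbσ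
  have haub : a' ≤ Real.pi * δ ^ (1-s) := aux_ub hδ hδs hprod ha' hσlb haσ
  -- ed x b₀ ≤ a + b, ed y b₀ ≤ a' + b'
  have hedx : ed x b₀ ≤ a + b := by
    have h1 : (x.1 - b₀.1)^2 + (x.2 - b₀.2)^2 ≤ (a+b)^2 := by
      rw [hx1, hx2]; exact aux_norm_le hue hue' ha hbnn
    calc ed x b₀ ≤ Real.sqrt ((a+b)^2) := Real.sqrt_le_sqrt h1
      _ = a + b := by rw [Real.sqrt_sq (by linarith)]
  have hedy : ed y b₀ ≤ a' + b' := by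
    have h1 : (y.1 - b₀.1)^2 + (y.2 - b₀.2)^2 ≤ (a'+b')^2 := by
      rw [hy1, hy2]; exact aux_norm_le hue hue' ha' hbnn'
    calc ed y b₀ ≤ Real.sqrt ((a'+b')^2) := Real.sqrt_le_sqrt h1
      _ = a' + b' := by rw [Real.sqrt_sq (by linarith)]
  -- lower bounds on a and b'
  have halb : (10 - Real.pi) * δ ^ (1-s) ≤ a := by
    rw [sub_mul]; linarith [le_trans hxfar hedx]
  have hblb : (10 - Real.pi) * δ ^ (1-s) ≤ b' := by
    rw [sub_mul]; linarith [le_trans hyfar hedy]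
  have hpos0 : 0 < (10 - Real.pi) * δ ^ (1-s) :=
    mul_pos (by linarith : (0:ℝ) < 10 - Real.pi) hδ1s
  have hapos : 0 < a := lt_of_lt_of_le hpos0 halb
  have hbpos : 0 < b' := lt_of_lt_of_le hpos0 hblb
  -- key bounds
  have keyb : 3 * δ < (b + b') * |σ| := by
    have h1 := aux_key hδ hδs hδ1s hprod hσlb hblb
    have hexp : (b + b') * |σ| = b * |σ| + b' * |σ| := by ring
    linarith [mul_nonneg hbnn (abs_nonneg σ)]
  have keya : 3 * δ < (a + a') * |σ| := by
    have h1 := aux_key hδ hδs hδ1s hprod hσlb halb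
    have hexp : (a + a') * |σ| = a * |σ| + a' * |σ| := by ring
    linarith [mul_nonneg ha' (abs_nonneg σ)]
  -- components of p := x + y - b₀
  set p : ℝ × ℝ := x + y - b₀ with hp
  have hz1 : p.1 - b₀.1 = (a + a') * e.1 + (b + b') * e'.1 := by
    simp only [hp, Prod.fst_add, Prod.fst_sub]; linarith [hx1, hy1]
  have hz2 : p.2 - b₀.2 = (a + a') * e.2 + (b + b') * e'.2 := by
    simp only [hp, Prod.snd_add, Prod.snd_sub]; linarith [hx2, hy2]
  refine ⟨⟨a + a', b + b', by linarith, by linarith, ?_⟩, ?_, ?_⟩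
  · apply Prod.ext <;> simp [hz1, hz2]
  · -- distance to tube T
    intro w hw
    have hperpu : (perp e).1^2 + (perp e).2^2 = 1 := by
      simp only [perp]; linear_combination hue
    have hcs := abs_dot_le hperpu p w
    have hD : (perp e).1 * (p.1 - w.1) + (perp e).2 * (p.2 - w.2)
        = (dot (perp e) b₀ - t) + (b + b') * σ - (dot (perp e) w - t) := by
      simp only [dot, perp, hσ]
      have e1 : p.1 = b₀.1 + ((a + a') * e.1 + (b + b') * e'.1) := by linarith [hz1]
      have e2 : p.2 = b₀.2 + ((a + a') * e.2 + (b + b') * e'.2) := by linarith [hz2]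
      rw [e1, e2]; ring
    have habsD : δ < |(perp e).1 * (p.1 - w.1) + (perp e).2 * (p.2 - w.2)| := by
      rw [hD]
      have h1 : |(b + b') * σ| = (b + b') * |σ| := by
        rw [abs_mul, abs_of_nonneg (by linarith : (0:ℝ) ≤ b + b')]
      have h2 := abs_sub_abs_le_abs_sub ((b + b') * σ)
        (-(dot (perp e) b₀ - t) + (dot (perp e) w - t))
      have h3 : |(-(dot (perp e) b₀ - t) + (dot (perp e) w - t))| ≤ 2 * δ := by
        calc |(-(dot (perp e) b₀ - t) + (dot (perp e) w - t))|
            ≤ |(-(dot (perp e) b₀ - t))| + |dot (perp e) w - t| := abs_add_le _ _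
          _ ≤ 2 * δ := by rw [abs_neg]; linarith
      have h4 : (b + b') * σ - (-(dot (perp e) b₀ - t) + (dot (perp e) w - t))
          = (dot (perp e) b₀ - t) + (b + b') * σ - (dot (perp e) w - t) := by ring
      rw [h4] at h2
      rw [h1] at h2
      linarith
    linarith [hcs]
  · -- distance to tube T'
    intro w hw
    have hperpu : (perp e').1^2 + (perp e').2^2 = 1 := by
      simp only [perp]; linear_combination hue'
    have hcs := abs_dot_le hperpu p w
    have hD : (perp e').1 * (p.1 - w.1) + (perp e').2 * (p.2 - w.2)
        = (dot (perp e') b₀ - t') + (a + a') * (-σ) - (dot (perp e') w - t') := by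
      simp only [dot, perp, hσ]
      have e1 : p.1 = b₀.1 + ((a + a') * e.1 + (b + b') * e'.1) := by linarith [hz1]
      have e2 : p.2 = b₀.2 + ((a + a') * e.2 + (b + b') * e'.2) := by linarith [hz2]
      rw [e1, e2]; ring
    have habsD : δ < |(perp e').1 * (p.1 - w.1) + (perp e').2 * (p.2 - w.2)| := by
      rw [hD]
      have h1 : |(a + a') * (-σ)| = (a + a') * |σ| := by
        rw [abs_mul, abs_neg, abs_of_nonneg (by linarith : (0:ℝ) ≤ a + a')]
      have h2 := abs_sub_abs_le_abs_sub ((a + a') * (-σ))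
        (-(dot (perp e') b₀ - t') + (dot (perp e') w - t'))
      have h3 : |(-(dot (perp e') b₀ - t') + (dot (perp e') w - t'))| ≤ 2 * δ := by
        calc |(-(dot (perp e') b₀ - t') + (dot (perp e') w - t'))|
            ≤ |(-(dot (perp e') b₀ - t'))| + |dot (perp e') w - t'| := abs_add_le _ _
          _ ≤ 2 * δ := by rw [abs_neg]; linarith
      have h4 : (a + a') * (-σ) - (-(dot (perp e') b₀ - t') + (dot (perp e') w - t'))
          = (dot (perp e') b₀ - t') + (a + a') * (-σ) - (dot (perp e') w - t') := by ring
      rw [h4] at h2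
      rw [h1] at h2
      linarith
    linarith [hcs]
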